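/- Let M be a completely specified deterministic prime FSM with n ≥ 2 states and state cover V containing ε, and let R = ⋀_{i=1}^k R(q_i,x_i,Z_i) be a composite requirement on M. Let m ≥ n and let S be a minimal completely specified DFSM with at most m states over the same alphabets. Suppose TS ⊆ Σ_I* satisfies (1) V.⋃_{i=0}^{m−n+1} Σ_I^i ⊆ TS, and (2) for every pair (α,β) in A(M) ∪ B(M1) ∪ C(M1) there is γ ∈ Δ_M(α,β) with α.γ, β.γ ∈ TS. If ω_S(s0, x̄) = ω_M(q0, x̄) for all x̄ ∈ TS, then S ⊨ R. -/
import Mathlib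


def dAfter {Q I : Type*} (δ : Q → I → Q) : Q → List I → Q
  | q, [] => q
  | q, x :: xs => dAfter δ (δ q x) xs

def oOut {Q I O : Type*} (δ : Q → I → Q) (ω : Q → I → O) : Q → List I → List O
  | _, [] => []
  | q, x :: xs => ω q x :: oOut δ ω (δ q x) xs

/-- Output set function of the abstraction M1: Z_i at requirement pairs, Σ_O elsewhere. -/
def reqOut {Q I O : Type*} {k : ℕ} (qr : Fin k → Q) (xr : Fin k → I)
    (Zr : Fin k → Set O) (q : Q) (x : I) : Set O :=
  {y | ∀ i, qr i = q → xr i = x → y ∈ Zr i}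

/-- Traces distinguishing q0-after-α from q0-after-β in the machine (δ, ω) (with outputs
in an arbitrary type, so this covers both M and its abstraction M1). -/
def distTraces {Q I O : Type*} (δ : Q → I → Q) (ω : Q → I → O) (q0 : Q)
    (α β : List I) : Set (List I) :=
  {γ | oOut δ ω (dAfter δ q0 α) γ ≠ oOut δ ω (dAfter δ q0 β) γ}

lemma dAfter_append {Q I : Type*} (δ : Q → I → Q) (q : Q) (a b : List I) :
    dAfter δ q (a ++ b) = dAfter δ (dAfter δ q a) b := by
  induction a generalizing q with
  | nil => rfl
  | cons x xs ih => simp only [List.cons_append, dAfter, List.append_eq, ih]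

lemma oOut_append {Q I O : Type*} (δ : Q → I → Q) (ω : Q → I → O) (q : Q) (a b : List I) :
    oOut δ ω q (a ++ b) = oOut δ ω q a ++ oOut δ ω (dAfter δ q a) b := by
  induction a generalizing q with
  | nil => rfl
  | cons x xs ih => simp only [List.cons_append, oOut, dAfter, List.append_eq, ih]

lemma oOut_length {Q I O : Type*} (δ : Q → I → Q) (ω : Q → I → O) (q : Q) (a : List I) :
    (oOut δ ω q a).length = a.length := by
  induction a generalizing q with
  | nil => rfl
  | cons x xs ih => simp only [oOut, List.length_cons, ih]

def outEq {Q I O : Type*} (δ : Q → I → Q) (ω : Q → I → O) (q q' : Q) : Prop :=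
  ∀ γ : List I, oOut δ ω q γ = oOut δ ω q' γ

lemma outEq_dAfter {Q I O : Type*} {δ : Q → I → Q} {ω : Q → I → O} {q q' : Q}
    (h : outEq δ ω q q') (w : List I) : outEq δ ω (dAfter δ q w) (dAfter δ q' w) := by
  induction w generalizing q q' with
  | nil => exact h
  | cons x xs ih =>
    have hstep : outEq δ ω (δ q x) (δ q' x) := by
      intro γ
      have := h (x :: γ)
      simp only [oOut, List.cons.injEq] at this
      exact this.2
    exact ih hstep

/-- Theorem on exhaustive test suites: if the test suite TS contains
V.⋃_{i=0..m-n+1} Σ_I^i and distinguishing extensions for all pairs in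
A(M) ∪ B(M1) ∪ C(M1), then passing TS (equality pass criterion) implies S ⊨ R. -/
theorem stmt_13 {Q S I O : Type*} [Fintype Q] [Fintype S]
    (δM : Q → I → Q) (ωM : Q → I → O) (q0 : Q)
    -- M is prime: all states reachable, distinct states distinguishable
    (hMreach : ∀ q : Q, ∃ π : List I, dAfter δM q0 π = q)
    (hMdist : ∀ q q' : Q, (∀ xs : List I, oOut δM ωM q xs = oOut δM ωM q' xs) → q = q')
    (hn2 : 2 ≤ Fintype.card Q)
    (m : ℕ) (hmn : Fintype.card Q ≤ m)
    -- S is a minimal completely specified DFSM with at most m states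
    (δS : S → I → S) (ωS : S → I → O) (s0 : S)
    (hSreach : ∀ s : S, ∃ π : List I, dAfter δS s0 π = s)
    (hSdist : ∀ s s' : S, (∀ xs : List I, oOut δS ωS s xs = oOut δS ωS s' xs) → s = s')
    (hScard : Fintype.card S ≤ m)
    -- V is a state cover of M containing the empty trace
    (V : Set (List I)) (hε : ([] : List I) ∈ V)
    (hcover : ∀ q : Q, ∃ v ∈ V, dAfter δM q0 v = q)
    -- the composite requirement R = ⋀_{i=1..k} R(q_i, x_i, Z_i)
    (k : ℕ) (qr : Fin k → Q) (xr : Fin k → I) (Zr : Fin k → Set O)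
    (hZ : ∀ i, ωM (qr i) (xr i) ∈ Zr i)
    (hWD : ∀ i j, qr i = qr j → xr i = xr j → Zr i = Zr j)
    -- the test suite
    (TS : Set (List I))
    -- condition (1): V.⋃_{i=0..m-n+1} Σ_I^i ⊆ TS
    (hTS1 : ∀ v ∈ V, ∀ w : List I,
      w.length ≤ m - Fintype.card Q + 1 → v ++ w ∈ TS)
    -- condition (2): distinguishing extensions for all pairs in A(M) ∪ B(M1) ∪ C(M1)
    (hTS2 : ∀ α β : List I,
      ((α ∈ V ∧ β ∈ V ∧ distTraces δM ωM q0 α β ≠ ∅) ∨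
       (((α ∈ V ∧ ∃ v ∈ V, ∃ w : List I, β = v ++ w ∧
            1 ≤ w.length ∧ w.length ≤ m - Fintype.card Q + 1) ∨
         (α <+: β ∧
          (∃ v ∈ V, ∃ w : List I, α = v ++ w ∧
            1 ≤ w.length ∧ w.length ≤ m - Fintype.card Q + 1) ∧
          (∃ v ∈ V, ∃ w : List I, β = v ++ w ∧
            1 ≤ w.length ∧ w.length ≤ m - Fintype.card Q + 1))) ∧
        distTraces δM (reqOut qr xr Zr) q0 α β ≠ ∅)) →
      ∃ γ ∈ distTraces δM ωM q0 α β, α ++ γ ∈ TS ∧ β ++ γ ∈ TS)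
    -- S passes TS with the equality pass criterion
    (hpass : ∀ xs ∈ TS, oOut δS ωS s0 xs = oOut δM ωM q0 xs) :
    -- then S satisfies the composite requirement R
    ∀ (i : Fin k) (π : List I), dAfter δM q0 π = qr i →
      ωS (dAfter δS s0 π) (xr i) ∈ Zr i := by
  classical
  choose rep hrepV hrepQ using hcover
  intro i π hπ
  set d := m - Fintype.card Q with hd
  -- ωM always satisfies the abstraction output sets
  have hωR : ∀ (q : Q) (x : I), ωM q x ∈ reqOut qr xr Zr q x := by
    intro q x
    simp only [reqOut, Set.mem_setOf_eq]
    intro j hq hx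
    subst hq; subst hx
    exact hZ j
  -- from passing: outputs of S and M agree after a common prefix in TS
  have hcancel : ∀ α γ : List I, α ++ γ ∈ TS →
      oOut δS ωS (dAfter δS s0 α) γ = oOut δM ωM (dAfter δM q0 α) γ := by
    intro α γ hmem
    have h := hpass _ hmem
    rw [oOut_append, oOut_append] at h
    exact List.append_inj_right h (by rw [oOut_length, oOut_length])
  have hnocol : ∀ α β γ : List I, dAfter δS s0 α = dAfter δS s0 β →
      α ++ γ ∈ TS → β ++ γ ∈ TS →
      oOut δM ωM (dAfter δM q0 α) γ = oOut δM ωM (dAfter δM q0 β) γ := by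
    intro α β γ hs hA hB
    rw [← hcancel α γ hA, hs, hcancel β γ hB]
  -- distinct states of M are reached by rep through distinct states of S
  have hrepInj : ∀ q q' : Q, dAfter δS s0 (rep q) = dAfter δS s0 (rep q') → q = q' := by
    intro q q' hs
    by_contra hne
    have hdist : ∃ γ, oOut δM ωM (dAfter δM q0 (rep q)) γ ≠
        oOut δM ωM (dAfter δM q0 (rep q')) γ := by
      by_contra h
      push_neg at h
      rw [hrepQ q, hrepQ q'] at h
      exact hne (hMdist _ _ h)
    obtain ⟨γ0, hγ0⟩ := hdist
    obtain ⟨γ, hγ, hA, hB⟩ := hTS2 (rep q) (rep q')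
      (Or.inl ⟨hrepV q, hrepV q',
        Set.nonempty_iff_ne_empty.mp ⟨γ0, hγ0⟩⟩)
    exact hγ (hnocol _ _ _ hs hA hB)
  -- collision between S-states forces M1-equivalence (for B/C shaped pairs)
  have hMeqOf : ∀ α β : List I, dAfter δS s0 α = dAfter δS s0 β →
      ((α ∈ V ∧ ∃ v ∈ V, ∃ w : List I, β = v ++ w ∧
          1 ≤ w.length ∧ w.length ≤ m - Fintype.card Q + 1) ∨
       (α <+: β ∧
        (∃ v ∈ V, ∃ w : List I, α = v ++ w ∧
          1 ≤ w.length ∧ w.length ≤ m - Fintype.card Q + 1) ∧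
        (∃ v ∈ V, ∃ w : List I, β = v ++ w ∧
          1 ≤ w.length ∧ w.length ≤ m - Fintype.card Q + 1))) →
      outEq δM (reqOut qr xr Zr) (dAfter δM q0 α) (dAfter δM q0 β) := by
    intro α β hs hshape
    by_contra hne
    simp only [outEq, not_forall] at hne
    obtain ⟨γ0, hγ0⟩ := hne
    obtain ⟨γ, hγ, hA, hB⟩ := hTS2 α β
      (Or.inr ⟨hshape, Set.nonempty_iff_ne_empty.mp ⟨γ0, hγ0⟩⟩)
    exact hγ (hnocol _ _ _ hs hA hB)
  -- the shrinking lemma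
  have hshrink : ∀ v ∈ V, ∀ w : List I, w.length ≤ d + 1 →
      ∃ v' ∈ V, ∃ w' : List I, w'.length ≤ d ∧
        dAfter δS s0 (v' ++ w') = dAfter δS s0 (v ++ w) ∧
        outEq δM (reqOut qr xr Zr) (dAfter δM q0 (v' ++ w')) (dAfter δM q0 (v ++ w)) := by
    intro v hv w hw
    by_cases hle : w.length ≤ d
    · exact ⟨v, hv, w, hle, rfl, fun γ => rfl⟩
    have hlen1 : w.length = d + 1 := by omega
    -- a collision with a proper prefix lets us shorten the trace
    have hfin : ∀ (v' : List I), v' ∈ V → ∀ (w₂ : List I) (jn : ℕ), jn + 1 ≤ d + 1 →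
        w₂.length ≤ jn →
        dAfter δS s0 (v' ++ w₂) = dAfter δS s0 (v ++ w.take (jn + 1)) →
        outEq δM (reqOut qr xr Zr) (dAfter δM q0 (v' ++ w₂))
          (dAfter δM q0 (v ++ w.take (jn + 1))) →
        ∃ v' ∈ V, ∃ w' : List I, w'.length ≤ d ∧
          dAfter δS s0 (v' ++ w') = dAfter δS s0 (v ++ w) ∧
          outEq δM (reqOut qr xr Zr) (dAfter δM q0 (v' ++ w')) (dAfter δM q0 (v ++ w)) := by
      intro v' hv' w₂ jn hjn hw₂ hs hq
      have hsplit : (v ++ w.take (jn+1)) ++ w.drop (jn+1) = v ++ w := by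
        rw [List.append_assoc, List.take_append_drop]
      refine ⟨v', hv', w₂ ++ w.drop (jn+1), ?_, ?_, ?_⟩
      · rw [List.length_append, List.length_drop, hlen1]; omega
      · rw [← List.append_assoc, dAfter_append, hs, ← dAfter_append, hsplit]
      · intro γ
        rw [← List.append_assoc, dAfter_append, ← hsplit,
          dAfter_append δM q0 (v ++ w.take (jn+1))]
        exact outEq_dAfter hq (w.drop (jn+1)) γ
    -- collision of a state-cover trace with a proper prefix
    have hBcol : ∀ (q : Q) (j : Fin (d+1)),
        dAfter δS s0 (rep q) = dAfter δS s0 (v ++ w.take (j.1+1)) →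
        ∃ v' ∈ V, ∃ w' : List I, w'.length ≤ d ∧
          dAfter δS s0 (v' ++ w') = dAfter δS s0 (v ++ w) ∧
          outEq δM (reqOut qr xr Zr) (dAfter δM q0 (v' ++ w')) (dAfter δM q0 (v ++ w)) := by
      intro q j hs
      have hjlt := j.isLt
      have hlt : (w.take (j.1+1)).length = j.1 + 1 := by
        rw [List.length_take, hlen1]; omega
      have hq : outEq δM (reqOut qr xr Zr) (dAfter δM q0 (rep q))
          (dAfter δM q0 (v ++ w.take (j.1+1))) :=
        hMeqOf _ _ hs (Or.inl ⟨hrepV q, v, hv, w.take (j.1+1), rfl, by omega, by omega⟩)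
      exact hfin (rep q) (hrepV q) [] j.1 (by omega) (by simp)
        (by rwa [List.append_nil]) (by rwa [List.append_nil])
    -- collision of two proper prefixes
    have hCcol : ∀ i2 j2 : ℕ, i2 < j2 → j2 + 1 ≤ d + 1 →
        dAfter δS s0 (v ++ w.take (i2+1)) = dAfter δS s0 (v ++ w.take (j2+1)) →
        ∃ v' ∈ V, ∃ w' : List I, w'.length ≤ d ∧
          dAfter δS s0 (v' ++ w') = dAfter δS s0 (v ++ w) ∧
          outEq δM (reqOut qr xr Zr) (dAfter δM q0 (v' ++ w')) (dAfter δM q0 (v ++ w)) := by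
      intro i2 j2 hij hj2 hs
      have hli : (w.take (i2+1)).length = i2 + 1 := by rw [List.length_take, hlen1]; omega
      have hlj : (w.take (j2+1)).length = j2 + 1 := by rw [List.length_take, hlen1]; omega
      have hpre : v ++ w.take (i2+1) <+: v ++ w.take (j2+1) := by
        rw [List.prefix_append_right_inj]
        have h := List.take_prefix (i2+1) (w.take (j2+1))
        rwa [List.take_take, min_eq_left (by omega : i2+1 ≤ j2+1)] at h
      have hq := hMeqOf _ _ hs (Or.inr ⟨hpre,
        ⟨v, hv, w.take (i2+1), rfl, by omega, by omega⟩,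
        ⟨v, hv, w.take (j2+1), rfl, by omega, by omega⟩⟩)
      exact hfin v hv (w.take (i2+1)) j2 (by omega) (by omega) hs hq
    -- pigeonhole over the states of S
    have hcard : Fintype.card S < Fintype.card (Q ⊕ Fin (d+1)) := by
      rw [Fintype.card_sum, Fintype.card_fin]
      omega
    obtain ⟨a, b, hab, hfab⟩ := Fintype.exists_ne_map_eq_of_card_lt
      (fun a : Q ⊕ Fin (d+1) => Sum.elim (fun q => dAfter δS s0 (rep q))
        (fun j : Fin (d+1) => dAfter δS s0 (v ++ w.take (j.1+1))) a) hcard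
    rcases a with q | j <;> rcases b with q' | j' <;>
      simp only [Sum.elim_inl, Sum.elim_inr] at hfab
    · exact absurd (by rw [hrepInj q q' hfab]) hab
    · exact hBcol q j' hfab
    · exact hBcol q' j hfab.symm
    · rcases lt_trichotomy j.1 j'.1 with h | h | h
      · have := j'.isLt
        exact hCcol j.1 j'.1 h (by omega) hfab
      · exact absurd (by rw [Fin.ext h]) hab
      · have := j.isLt
        exact hCcol j'.1 j.1 h (by omega) hfab.symm
  -- main claim: every trace of S is matched by a short trace in V.Σ^{≤ m-n}
  have hmain : ∀ τ : List I, ∃ v' ∈ V, ∃ w' : List I, w'.length ≤ d ∧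
      dAfter δS s0 (v' ++ w') = dAfter δS s0 τ ∧
      outEq δM (reqOut qr xr Zr) (dAfter δM q0 (v' ++ w')) (dAfter δM q0 τ) := by
    intro τ
    induction τ using List.reverseRecOn with
    | nil => exact ⟨[], hε, [], Nat.zero_le _, rfl, fun γ => rfl⟩
    | append_singleton τ' x ih =>
      obtain ⟨v', hv', w', hw', hsEq, hqEq⟩ := ih
      obtain ⟨v₂, hv₂, w₂, hw₂, hs2, hq2⟩ := hshrink v' hv' (w' ++ [x])
        (by rw [List.length_append, List.length_singleton]; omega)
      refine ⟨v₂, hv₂, w₂, hw₂, ?_, ?_⟩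
      · rw [hs2, ← List.append_assoc, dAfter_append, hsEq, ← dAfter_append]
      · intro γ
        rw [hq2 γ, ← List.append_assoc, dAfter_append, dAfter_append δM q0 τ']
        exact outEq_dAfter hqEq [x] γ
  -- conclusion
  obtain ⟨v', hv', w', hw', hsEq, hqEq⟩ := hmain π
  have hmem : (v' ++ w') ++ [xr i] ∈ TS := by
    rw [List.append_assoc]
    exact hTS1 v' hv' (w' ++ [xr i])
      (by rw [List.length_append, List.length_singleton]; omega)
  have h1 := hcancel (v' ++ w') [xr i] hmem
  simp only [oOut, List.cons.injEq, and_true] at h1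
  have h3 := hqEq [xr i]
  simp only [oOut, List.cons.injEq, and_true] at h3
  have h4 : ωS (dAfter δS s0 π) (xr i) ∈ reqOut qr xr Zr (dAfter δM q0 π) (xr i) := by
    rw [← hsEq, h1, ← h3]
    exact hωR _ _
  rw [hπ] at h4
  exact h4 i rfl rfl
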